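/- For n ≥ 1, m ≥ 0, define the suspension on Γ₀ by Σ(i,a,b) = (i+1 mod n, a + 1 + δ_{i,n−1}·m, b + 1 + δ_{i,0}·m). Then Σ maps Γ₀ bijectively onto Γ₀, and Σ^n (i,a,b) = (i, a + n + m, b + n + m) for all (i,a,b) ∈ Γ₀. -/

import Mathlib

/-- The vertex set `Γ₀ = {(i,a,b) : i ∈ [0,n-1], a ≤ b + δ_{i,0}·m}`. -/
def Gamma0 (n m : ℤ) : Set (ℤ × ℤ × ℤ) :=
  {V | 0 ≤ V.1 ∧ V.1 ≤ n - 1 ∧ V.2.1 ≤ V.2.2 + (if V.1 = 0 then m else 0)}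

/-- For `V = (i,a,b)`, the set `F_V = {(i,x,y) : a ≤ x ≤ b + δ_{i,0}·m, y ≥ b}`. -/
def Fset (n m : ℤ) (V : ℤ × ℤ × ℤ) : Set (ℤ × ℤ × ℤ) :=
  {U | U.1 = V.1 ∧ V.2.1 ≤ U.2.1 ∧
    U.2.1 ≤ V.2.2 + (if V.1 = 0 then m else 0) ∧ V.2.2 ≤ U.2.2}

/-- For `V = (i,a,b)`, the set
`G_V = {(i+1 mod n, x, y) : x ≤ a + δ_{i,n-1}·m, a ≤ y ≤ b + δ_{i,0}·m}`. -/
def Gset (n m : ℤ) (V : ℤ × ℤ × ℤ) : Set (ℤ × ℤ × ℤ) :=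
  {U | U.1 = (V.1 + 1) % n ∧ U.2.1 ≤ V.2.1 + (if V.1 = n - 1 then m else 0) ∧
    V.2.1 ≤ U.2.2 ∧ U.2.2 ≤ V.2.2 + (if V.1 = 0 then m else 0)}

/-- The suspension `Σ(i,a,b) = (i+1 mod n, a+1+δ_{i,n-1}·m, b+1+δ_{i,0}·m)`. -/
def SigmaMap (n m : ℤ) (V : ℤ × ℤ × ℤ) : ℤ × ℤ × ℤ :=
  ((V.1 + 1) % n, V.2.1 + 1 + (if V.1 = n - 1 then m else 0),
    V.2.2 + 1 + (if V.1 = 0 then m else 0))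

/-- Explicit inverse of the suspension. -/
def Tmap (n m : ℤ) (V : ℤ × ℤ × ℤ) : ℤ × ℤ × ℤ :=
  ((V.1 - 1) % n, V.2.1 - 1 - (if (V.1 - 1) % n = n - 1 then m else 0),
    V.2.2 - 1 - (if (V.1 - 1) % n = 0 then m else 0))

lemma succ_ediv_emod (n x : ℤ) (hn : 0 < n) :
    ((x+1)/n = x/n + if x % n = n-1 then 1 else 0) ∧
    ((x+1)%n = if x % n = n-1 then 0 else x%n+1) := by
  have h1 : n * (x / n) + x % n = x := Int.mul_ediv_add_emod x n
  have h2 : 0 ≤ x % n := Int.emod_nonneg x (by omega)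
  have h3 : x % n < n := Int.emod_lt_of_pos x hn
  by_cases h : x % n = n - 1
  · have e : x + 1 = n * (x/n + 1) := by rw [mul_add]; omega
    have hd : (x+1)/n = x/n + 1 := by rw [e, Int.mul_ediv_cancel_left _ (by omega)]
    have hm : (x+1)%n = 0 := by rw [e]; exact Int.mul_emod_right n _
    simp [h, hd, hm]
  · have e : x + 1 = (x % n + 1) + n * (x/n) := by omega
    have hd : (x+1)/n = x/n := by
      rw [e, Int.add_mul_ediv_left _ _ (by omega : n ≠ 0),
        Int.ediv_eq_zero_of_lt (by omega) (by omega)]; ring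
    have hm : (x+1)%n = x % n + 1 := by
      rw [e, Int.add_mul_emod_self_left, Int.emod_eq_of_lt (by omega) (by omega)]
    simp [h, hd, hm]

lemma iter_formula (n m : ℤ) (hn : 0 < n) (i a b : ℤ) (hi : 0 ≤ i) (hi' : i < n) (k : ℕ) :
    (SigmaMap n m)^[k] (i,a,b) =
      ((i+k)%n, a + k + m*((i+k)/n), b + k + m*((i+k-1)/n - (i-1)/n)) := by
  induction k with
  | zero =>
      simp [Int.emod_eq_of_lt hi hi', Int.ediv_eq_zero_of_lt hi hi']
  | succ k ih =>
      rw [Function.iterate_succ_apply', ih]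
      have hx := succ_ediv_emod n (i+k) hn
      have hy := succ_ediv_emod n (i+k-1) hn
      have h2 : 0 ≤ (i+k-1) % n := Int.emod_nonneg _ (by omega)
      have hcond : ((i+(k:ℤ))%n = 0) ↔ ((i+k-1)%n = n-1) := by
        constructor
        · intro h
          by_contra hc
          rw [(by ring : i+(k:ℤ) = (i+k-1)+1), hy.2, if_neg hc] at h
          omega
        · intro h
          rw [(by ring : i+(k:ℤ) = (i+k-1)+1), hy.2, if_pos h]
      simp only [SigmaMap, Prod.mk.injEq]
      refine ⟨?_, ?_, ?_⟩
      · rw [show ((i+(k:ℤ))%n + 1) % n = (i+k+1)%n from ?_]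
        · push_cast; ring_nf
        · conv_rhs => rw [Int.add_emod]
          rw [Int.add_emod ((i+(k:ℤ))%n) 1, Int.emod_emod_of_dvd _ dvd_rfl]
      · push_cast
        rw [show i+((k:ℤ)+1) = (i+k)+1 by ring, hx.1]
        split <;> ring
      · push_cast
        rw [show i+((k:ℤ)+1)-1 = (i+k-1)+1 by ring, hy.1]
        by_cases h : (i+(k:ℤ))%n = 0
        · rw [if_pos h, if_pos (hcond.mp h)]; ring
        · rw [if_neg h, if_neg (fun hc => h (hcond.mpr hc))]; ring

theorem stmt14 (n m : ℤ) (hn : 1 ≤ n) (hm : 0 ≤ m) :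
    Set.BijOn (SigmaMap n m) (Gamma0 n m) (Gamma0 n m) ∧
    ∀ V ∈ Gamma0 n m,
      (SigmaMap n m)^[n.toNat] V = (V.1, V.2.1 + n + m, V.2.2 + n + m) := by
  have hn0 : 0 < n := hn
  -- basic facts about indices
  have hidx : ∀ i : ℤ, 0 ≤ i → i ≤ n - 1 → (i + 1) % n = if i = n - 1 then 0 else i + 1 := by
    intro i h0 h1
    by_cases h : i = n - 1
    · simp [h]
    · rw [if_neg h, Int.emod_eq_of_lt (by omega) (by omega)]
  have hidx' : ∀ i : ℤ, 0 ≤ i → i ≤ n - 1 → (i - 1) % n = if i = 0 then n - 1 else i - 1 := by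
    intro i h0 h1
    by_cases h : i = 0
    · subst h
      rw [if_pos rfl, show (0:ℤ) - 1 = (n-1) + (-1)*n by ring,
        Int.add_mul_emod_self_right, Int.emod_eq_of_lt (by omega) (by omega)]
    · rw [if_neg h, Int.emod_eq_of_lt (by omega) (by omega)]
  have hmapsTo : Set.MapsTo (SigmaMap n m) (Gamma0 n m) (Gamma0 n m) := by
    rintro ⟨i, a, b⟩ ⟨h0, h1, h2⟩
    simp only [Gamma0, SigmaMap, Set.mem_setOf_eq] at *
    rw [hidx i h0 h1]
    by_cases h : i = n - 1 <;> by_cases h' : i = 0 <;> simp_all <;>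
      first | omega | (split_ifs <;> omega)
  have hmapsTo' : Set.MapsTo (Tmap n m) (Gamma0 n m) (Gamma0 n m) := by
    rintro ⟨i, a, b⟩ ⟨h0, h1, h2⟩
    simp only [Gamma0, Tmap, Set.mem_setOf_eq] at *
    rw [hidx' i h0 h1]
    by_cases h : i = 0 <;> simp_all <;>
      first | omega | (split_ifs <;> omega)
  have hleft : ∀ V ∈ Gamma0 n m, Tmap n m (SigmaMap n m V) = V := by
    rintro ⟨i, a, b⟩ ⟨h0, h1, h2⟩
    simp only [Gamma0, Set.mem_setOf_eq] at *
    have key : ((i + 1) % n - 1) % n = i := by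
      rw [hidx i h0 h1]
      by_cases h : i = n - 1
      · rw [if_pos h, show (0:ℤ) - 1 = (n-1) + (-1)*n by ring,
          Int.add_mul_emod_self_right, Int.emod_eq_of_lt (by omega) (by omega)]; omega
      · rw [if_neg h]; simpa using Int.emod_eq_of_lt (by omega) (by omega)
    simp only [Tmap, SigmaMap, key, Prod.mk.injEq]
    exact ⟨by trivial, by split_ifs <;> ring, by split_ifs <;> ring⟩
  have hright : ∀ V ∈ Gamma0 n m, SigmaMap n m (Tmap n m V) = V := by
    rintro ⟨i, a, b⟩ ⟨h0, h1, h2⟩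
    simp only [Gamma0, Set.mem_setOf_eq] at *
    have key : ((i - 1) % n + 1) % n = i := by
      rw [hidx' i h0 h1]
      by_cases h : i = 0
      · rw [if_pos h, show n - 1 + 1 = 0 + 1*n by ring, Int.add_mul_emod_self_right,
          Int.emod_eq_of_lt (by omega) (by omega)]; omega
      · rw [if_neg h]; simpa using Int.emod_eq_of_lt (by omega) (by omega)
    simp only [SigmaMap, Tmap, key, Prod.mk.injEq]
    exact ⟨by trivial, by by_cases hc : (i - 1) % n = n - 1 <;> simp [hc] <;> ring,
      by by_cases hc : (i - 1) % n = 0 <;> simp [hc] <;> ring⟩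
  constructor
  · exact Set.InvOn.bijOn ⟨hleft, hright⟩ hmapsTo hmapsTo'
  · rintro ⟨i, a, b⟩ ⟨h0, h1, h2⟩
    simp only [Gamma0, Set.mem_setOf_eq] at h0 h1 h2
    have hk : ((n.toNat : ℤ)) = n := Int.toNat_of_nonneg (by omega)
    rw [iter_formula n m hn0 i a b h0 (by omega) n.toNat, hk]
    have e1 : (i + n) % n = i := by
      rw [show i + n = i + 1*n by ring, Int.add_mul_emod_self_right,
        Int.emod_eq_of_lt h0 (by omega)]
    have e2 : (i + n) / n = 1 := by
      rw [show i + n = i + 1*n by ring, Int.add_mul_ediv_right _ _ (by omega : n ≠ 0),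
        Int.ediv_eq_zero_of_lt h0 (by omega)]
      norm_num
    have e3 : (i + n - 1) / n = (i - 1) / n + 1 := by
      rw [show i + n - 1 = (i-1) + 1*n by ring, Int.add_mul_ediv_right _ _ (by omega : n ≠ 0)]
    rw [e1, e2, e3]
    simp only [Prod.mk.injEq]
    exact ⟨by trivial, by ring, by ring⟩
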